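/- Let d = 2, ν > 0, n ≥ 1, V* ≥ 0, and let f_k : ℝ → ℂ² (0 < |k| ≤ n) be a continuous forcing with V(f(t)) = Σ_{0<|k|≤n}|k|²|f_k(t)|² ≤ ν² V* for all t. Let u be a real, divergence-free solution of the symmetric Galerkin projection of order n of the Navier–Stokes Fourier system with forcing f. Then for all t₀ and all t ≥ 0, ‖u(t₀+t)‖₁ ≤ (‖u(t₀)‖₁ − √V*) e^{−νt} + √V*, where ‖u‖₁ = √(Σ_{k}|k|²|u_k|²). -/

import Mathlib

noncomputable section

open scoped BigOperators

/-- Euclidean norm of an integer vector `k ∈ ℤ^d ⊂ ℝ^d`. -/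
def znorm {d : ℕ} (k : Fin d → ℤ) : ℝ := Real.sqrt (∑ i, ((k i : ℝ))^2)

/-- The bilinear pairing `(a·k) = Σ_j a_j k_j` of a complex vector with an integer vector. -/
def dotZ {d : ℕ} (a : EuclideanSpace ℂ (Fin d)) (k : Fin d → ℤ) : ℂ := ∑ j, a j * (k j : ℂ)

/-- Orthogonal projection `Π_k` onto the orthogonal complement of the (real) vector `k`. -/
def projP {d : ℕ} (k : Fin d → ℤ) (v : EuclideanSpace ℂ (Fin d)) : EuclideanSpace ℂ (Fin d) :=
  WithLp.toLp 2 (fun j => v j - (dotZ v k / ((∑ i, ((k i : ℝ))^2 : ℝ) : ℂ)) * (k j : ℂ))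

/-- The `k1`-th term of the Navier–Stokes nonlinearity
`N_k(u) = -i Σ_{k1 ≠ 0} (u_{k1}·k) Π_k u_{k-k1}`. -/
def Nterm {d : ℕ} (u : (Fin d → ℤ) → EuclideanSpace ℂ (Fin d)) (k k1 : Fin d → ℤ) :
    EuclideanSpace ℂ (Fin d) :=
  if k1 = 0 then 0 else (-Complex.I * dotZ (u k1) k) • projP k (u (k - k1))

/-- The Navier–Stokes nonlinearity `N_k(u)`. -/
def Nfun {d : ℕ} (u : (Fin d → ℤ) → EuclideanSpace ℂ (Fin d)) (k : Fin d → ℤ) :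
    EuclideanSpace ℂ (Fin d) := ∑' k1, Nterm u k k1

/-- Energy `E(u) = Σ_k |u_k|²`. -/
def energy {d : ℕ} (u : (Fin d → ℤ) → EuclideanSpace ℂ (Fin d)) : ℝ := ∑' k, ‖u k‖^2

/-- Enstrophy `V(u) = Σ_k |k|²|u_k|²`. -/
def enstrophy {d : ℕ} (u : (Fin d → ℤ) → EuclideanSpace ℂ (Fin d)) : ℝ :=
  ∑' k, (znorm k)^2 * ‖u k‖^2

/-- Divergence-free: `(u_k · k) = 0` for all `k`. -/
def divFree {d : ℕ} (u : (Fin d → ℤ) → EuclideanSpace ℂ (Fin d)) : Prop :=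
  ∀ k, dotZ (u k) k = 0

/-- Reality condition: `u_{-k} = conj (u_k)`. -/
def realSeq {d : ℕ} (u : (Fin d → ℤ) → EuclideanSpace ℂ (Fin d)) : Prop :=
  ∀ k j, u (-k) j = starRingEnd ℂ (u k j)

/-- RHS of the Galerkin-projected Navier–Stokes system in the Fourier domain.
(For `u` supported on modes `0 < |k| ≤ n`, the `tsum` below reduces to the finite sum
over `k1 ≠ 0`, `|k1| ≤ n`, `0 < |k-k1| ≤ n`.) -/
def GalerkinRHS {d : ℕ} (ν : ℝ) (fk : EuclideanSpace ℂ (Fin d))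
    (u : (Fin d → ℤ) → EuclideanSpace ℂ (Fin d)) (k : Fin d → ℤ) :
    EuclideanSpace ℂ (Fin d) :=
  (∑' k1, Nterm u k k1) - ((ν * (znorm k)^2 : ℝ) : ℂ) • u k + projP k fk

/-- `u : ℝ → (ℤ^d → ℂ^d)` is a solution of the symmetric Galerkin projection of order `n`
of the Navier–Stokes Fourier system with viscosity `ν` and forcing `f`. -/
def IsGalerkinSol {d : ℕ} (ν n : ℝ) (f : ℝ → (Fin d → ℤ) → EuclideanSpace ℂ (Fin d))
    (u : ℝ → (Fin d → ℤ) → EuclideanSpace ℂ (Fin d)) : Prop :=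
  (∀ t, u t 0 = 0) ∧
  (∀ t k, n < znorm k → u t k = 0) ∧
  (∀ t (k : Fin d → ℤ), k ≠ 0 → znorm k ≤ n →
    HasDerivAt (fun s => u s k) (GalerkinRHS ν (f t k) (u t) k) t)


/-! ### Auxiliary definitions and lemmas -/

section Aux
open Finset

local notation "Z2" => (Fin 2 → ℤ)
local notation "E2" => EuclideanSpace ℂ (Fin 2)

/-- squared euclidean norm of an integer vector, as a real number -/
def qk (k : Z2) : ℝ := ((k 0 : ℝ))^2 + ((k 1 : ℝ))^2

/-- 2d cross product `k × v` -/
def cC (m : Z2) (v : E2) : ℂ := (m 0 : ℂ) * v 1 - (m 1 : ℂ) * v 0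

/-- real inner product on `E2` -/
def rip (v w : E2) : ℝ := ((starRingEnd ℂ) (v 0) * w 0 + (starRingEnd ℂ) (v 1) * w 1).re

lemma znorm_sq (k : Z2) : znorm k ^ 2 = qk k := by
  rw [znorm, Fin.sum_univ_two, Real.sq_sqrt (by positivity)]; rfl

lemma dotZ_expand (a : E2) (k : Z2) : dotZ a k = a 0 * (k 0 : ℂ) + a 1 * (k 1 : ℂ) := by
  rw [dotZ, Fin.sum_univ_two]

lemma norm_sq_eq (v : E2) : ‖v‖^2 = rip v v := by
  rw [EuclideanSpace.norm_eq, Real.sq_sqrt (by positivity), Fin.sum_univ_two, rip]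
  simp only [Complex.sq_norm, Complex.normSq_apply, Complex.mul_re,
    Complex.add_re, Complex.conj_re, Complex.conj_im]
  ring

lemma rip_nonneg_self (v : E2) : 0 ≤ rip v v := by rw [← norm_sq_eq]; positivity

/-- the key 2d identity: for `a ⊥ k`, `|k|² ⟨a,w⟩ = conj (k × a) (k × w)`. -/
lemma key_id (k : Z2) (a w : E2) (ha : dotZ a k = 0) :
    znorm k ^ 2 * rip a w = ((starRingEnd ℂ) (cC k a) * cC k w).re := by
  have hconj : (starRingEnd ℂ) (a 0) * (k 0 : ℂ) + (starRingEnd ℂ) (a 1) * (k 1 : ℂ) = 0 := by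
    have := congrArg (starRingEnd ℂ) ha
    rw [dotZ_expand] at this
    simpa [map_add, map_mul] using this
  rw [znorm_sq, rip]
  have : ((qk k : ℝ) : ℂ) * ((starRingEnd ℂ) (a 0) * w 0 + (starRingEnd ℂ) (a 1) * w 1)
      = (starRingEnd ℂ) (cC k a) * cC k w := by
    simp only [qk, cC, map_sub, map_mul, map_intCast]
    push_cast
    linear_combination ((k 0 : ℂ) * w 0 + (k 1 : ℂ) * w 1) * hconj
  rw [qk] at this ⊢
  calc ((k 0:ℝ)^2 + (k 1:ℝ)^2) * ((starRingEnd ℂ) (a 0) * w 0 + (starRingEnd ℂ) (a 1) * w 1).re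
      = ((((k 0:ℝ)^2 + (k 1:ℝ)^2 : ℝ) : ℂ) * ((starRingEnd ℂ) (a 0) * w 0 + (starRingEnd ℂ) (a 1) * w 1)).re := by
        rw [Complex.re_ofReal_mul]
    _ = ((starRingEnd ℂ) (cC k a) * cC k w).re := by rw [← this]

/-- representation of a divergence-free 2d vector -/
lemma rep (k : Z2) (hk : k ≠ 0) (v : E2) (hv : dotZ v k = 0) :
    ∃ l : ℂ, v 0 = -l * (k 1 : ℂ) ∧ v 1 = l * (k 0 : ℂ) := by
  rw [dotZ_expand] at hv
  have hk' : k 0 ≠ 0 ∨ k 1 ≠ 0 := by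
    by_contra h
    push_neg at h
    exact hk (funext fun j => by fin_cases j <;> simp [h.1, h.2])
  rcases hk' with h | h
  · have h0 : (k 0 : ℂ) ≠ 0 := by exact_mod_cast h
    refine ⟨v 1 / (k 0 : ℂ), ?_, by field_simp⟩
    field_simp
    linear_combination hv
  · have h1 : (k 1 : ℂ) ≠ 0 := by exact_mod_cast h
    refine ⟨-(v 0) / (k 1 : ℂ), by field_simp, ?_⟩
    field_simp
    linear_combination hv

lemma sum_apply' {ι : Type*} (s : Finset ι) (g : ι → E2) (j : Fin 2) :
    (∑ i ∈ s, g i) j = ∑ i ∈ s, g i j := by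
  rw [WithLp.ofLp_sum]; exact Finset.sum_apply j s fun i => g i


lemma znorm_nonneg (k : Fin 2 → ℤ) : 0 ≤ znorm k := Real.sqrt_nonneg _

lemma znorm_neg (k : Fin 2 → ℤ) : znorm (-k) = znorm k := by
  unfold znorm
  congr 1
  apply Finset.sum_congr rfl
  intro i _
  rw [Pi.neg_apply]
  push_cast
  ring

/-- the complex-valued summand of the nonlinear enstrophy flux -/
def Fc (w : Z2 → E2) (p : Z2 × Z2) : ℂ :=
  (starRingEnd ℂ) (cC (p.1 + p.2) (w (p.1 + p.2))) *
    ((-Complex.I * dotZ (w p.1) (p.1 + p.2)) * cC (p.1 + p.2) (w p.2))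

/-- The six-term cancellation identity (2D vorticity structure). -/
lemma six_sum (w : Z2 → E2) (h0 : w 0 = 0) (hreal : realSeq w) (hdiv : divFree w)
    (a b : Z2) :
    Fc w (a, b) + Fc w (b, a) + Fc w (a, -a-b) + Fc w (-a-b, a)
      + Fc w (b, -a-b) + Fc w (-a-b, b) = 0 := by
  have e1 : a + b = -(-a-b) := by abel
  have e2 : b + a = -(-a-b) := by abel
  have e3 : a + (-a-b) = -b := by abel
  have e4 : (-a-b) + a = -b := by abel
  have e5 : b + (-a-b) = -a := by abel
  have e6 : (-a-b) + b = -a := by abel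
  have Hwa : w (-a) = WithLp.toLp 2 (fun j => (starRingEnd ℂ) (w a j)) := by
    ext j; exact hreal a j
  have Hwb : w (-b) = WithLp.toLp 2 (fun j => (starRingEnd ℂ) (w b j)) := by
    ext j; exact hreal b j
  have Hwe : w (-(-a-b)) = WithLp.toLp 2 (fun j => (starRingEnd ℂ) (w (-a-b) j)) := by
    ext j; exact hreal (-a-b) j
  simp only [Fc]
  rw [e1, e2, e3, e4, e5, e6, Hwa, Hwb, Hwe]
  by_cases hA : w a = 0
  · simp [hA, cC, dotZ_expand]
  by_cases hB : w b = 0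
  · simp [hB, cC, dotZ_expand]
  by_cases hE : w (-a-b) = 0
  · simp [hE, cC, dotZ_expand]
  have ha : a ≠ 0 := fun h => hA (by rw [h]; exact h0)
  have hb : b ≠ 0 := fun h => hB (by rw [h]; exact h0)
  have he : -a-b ≠ 0 := fun h => hE (by rw [h]; exact h0)
  obtain ⟨la, ha0, ha1⟩ := rep a ha (w a) (hdiv a)
  obtain ⟨lb, hb0, hb1⟩ := rep b hb (w b) (hdiv b)
  obtain ⟨le, he0, he1⟩ := rep (-a-b) he (w (-a-b)) (hdiv (-a-b))
  simp only [cC, dotZ_expand, map_sub, map_mul, map_neg, map_intCast, Complex.conj_conj,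
    PiLp.toLp_apply]
  rw [ha0, ha1, hb0, hb1, he0, he1]
  simp only [Pi.neg_apply, Pi.sub_apply, map_mul, map_neg, map_intCast]
  push_cast
  ring

/-- vanishing of the total nonlinear enstrophy flux in 2D -/
lemma nonlin (n : ℝ) (S : Finset Z2) (hS : ∀ k, k ∈ S ↔ (k ≠ 0 ∧ znorm k ≤ n))
    (w : Z2 → E2) (h0 : w 0 = 0) (hsupp : ∀ k, k ∉ S → w k = 0)
    (hreal : realSeq w) (hdiv : divFree w) :
    ∑ k ∈ S, znorm k ^ 2 * rip (w k) (∑ k1 ∈ S, Nterm w k k1) = 0 := by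
  classical
  have hRe : ∀ k ∈ S, znorm k ^ 2 * rip (w k) (∑ k1 ∈ S, Nterm w k k1)
      = ((starRingEnd ℂ) (cC k (w k)) * cC k (∑ k1 ∈ S, Nterm w k k1)).re :=
    fun k _ => key_id k (w k) _ (hdiv k)
  rw [Finset.sum_congr rfl hRe, ← Complex.re_sum]
  have hcCsum : ∀ k, cC k (∑ k1 ∈ S, Nterm w k k1) = ∑ k1 ∈ S, cC k (Nterm w k k1) := by
    intro k
    simp [cC, sum_apply', Finset.mul_sum, Finset.sum_sub_distrib]
  have hterm : ∀ k ∈ S, ∀ k1 ∈ S,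
      (starRingEnd ℂ) (cC k (w k)) * cC k (Nterm w k k1) = Fc w (k1, k - k1) := by
    intro k hk k1 hk1
    have hk1ne : k1 ≠ 0 := ((hS k1).mp hk1).1
    have hkk : k1 + (k - k1) = k := by abel
    rw [Nterm, if_neg hk1ne]
    have hsm : cC k ((-Complex.I * dotZ (w k1) k) • projP k (w (k - k1)))
        = (-Complex.I * dotZ (w k1) k) * cC k (w (k - k1)) := by
      simp only [cC, PiLp.smul_apply, smul_eq_mul, projP, PiLp.toLp_apply]
      ring
    rw [hsm]
    simp only [Fc, hkk]
  have hdist : ∑ k ∈ S, (starRingEnd ℂ) (cC k (w k)) * cC k (∑ k1 ∈ S, Nterm w k k1)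
      = ∑ k ∈ S, ∑ k1 ∈ S, Fc w (k1, k - k1) := by
    refine Finset.sum_congr rfl fun k hk => ?_
    rw [hcCsum k, Finset.mul_sum]
    exact Finset.sum_congr rfl fun k1 hk1 => hterm k hk k1 hk1
  rw [hdist]
  set R : Finset ((Fin 2 → ℤ) × (Fin 2 → ℤ)) := (S ×ˢ S).filter (fun p => p.1 + p.2 ∈ S)
    with hRdef
  have hmemR : ∀ p : (Fin 2 → ℤ) × (Fin 2 → ℤ),
      p ∈ R ↔ (p.1 ∈ S ∧ p.2 ∈ S ∧ p.1 + p.2 ∈ S) := by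
    intro p
    simp [hRdef, Finset.mem_filter, Finset.mem_product, and_assoc]
  have hFczero : ∀ p : (Fin 2 → ℤ) × (Fin 2 → ℤ), p ∉ R → Fc w p = 0 := by
    intro p hp
    by_cases h1 : p.1 ∈ S
    · by_cases h2 : p.2 ∈ S
      · have h3 : p.1 + p.2 ∉ S := fun h => hp ((hmemR p).mpr ⟨h1, h2, h⟩)
        simp [Fc, cC, hsupp _ h3]
      · simp [Fc, cC, hsupp _ h2]
    · simp [Fc, dotZ_expand, hsupp _ h1]
  have hnegS : ∀ k, k ∈ S → -k ∈ S := by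
    intro k hk
    obtain ⟨h1, h2⟩ := (hS k).mp hk
    exact (hS (-k)).mpr ⟨neg_ne_zero.mpr h1, by rw [znorm_neg]; exact h2⟩
  -- reduce the double sum to a sum over R
  have hinj : ∀ x ∈ S ×ˢ S, ∀ y ∈ S ×ˢ S,
      (fun p : (Fin 2 → ℤ) × (Fin 2 → ℤ) => (p.2, p.1 - p.2)) x
        = (fun p : (Fin 2 → ℤ) × (Fin 2 → ℤ) => (p.2, p.1 - p.2)) y → x = y := by
    intro x _ y _ hxy
    simp only [Prod.mk.injEq] at hxy
    obtain ⟨h1, h2⟩ := hxy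
    rw [h1] at h2
    exact Prod.ext (by rwa [sub_left_inj] at h2) h1
  have hA : ∑ k ∈ S, ∑ k1 ∈ S, Fc w (k1, k - k1) = ∑ p ∈ R, Fc w p := by
    have hp1 : ∑ k ∈ S, ∑ k1 ∈ S, Fc w (k1, k - k1)
        = ∑ p ∈ S ×ˢ S, Fc w (p.2, p.1 - p.2) :=
      (Finset.sum_product S S (fun p : (Fin 2 → ℤ) × (Fin 2 → ℤ) => Fc w (p.2, p.1 - p.2))).symm
    have hp2 : ∑ p ∈ (S ×ˢ S).image (fun p : (Fin 2 → ℤ) × (Fin 2 → ℤ) => (p.2, p.1 - p.2)),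
        Fc w p = ∑ p ∈ S ×ˢ S, Fc w (p.2, p.1 - p.2) := Finset.sum_image hinj
    rw [hp1, ← hp2]
    refine (Finset.sum_subset ?_ ?_).symm
    · intro p hp
      obtain ⟨h1, h2, h3⟩ := (hmemR p).mp hp
      refine Finset.mem_image.mpr ⟨(p.1 + p.2, p.1), Finset.mem_product.mpr ⟨h3, h1⟩, ?_⟩
      exact Prod.ext rfl (by show p.1 + p.2 - p.1 = p.2; abel)
    · intro q _ hq
      exact hFczero q hq
  rw [hA]
  have mk_eq : ∀ (x y : (Fin 2 → ℤ) × (Fin 2 → ℤ)), x.1 = y.1 → x.2 = y.2 → x = y :=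
    fun x y h1 h2 => Prod.ext h1 h2
  -- the five reindexing bijections
  have hstab : ∀ p : (Fin 2 → ℤ) × (Fin 2 → ℤ), p ∈ R →
      (((p.2, p.1) : _ × _) ∈ R ∧ ((p.1, -p.1-p.2) : _ × _) ∈ R ∧
       ((-p.1-p.2, p.1) : _ × _) ∈ R ∧ ((p.2, -p.1-p.2) : _ × _) ∈ R ∧
       ((-p.1-p.2, p.2) : _ × _) ∈ R) := by
    intro p hp
    obtain ⟨h1, h2, h3⟩ := (hmemR p).mp hp
    have hE : -p.1-p.2 ∈ S := by
      rw [show -p.1-p.2 = -(p.1+p.2) from by abel]; exact hnegS _ h3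
    have hn1 : -p.1 ∈ S := hnegS _ h1
    have hn2 : -p.2 ∈ S := hnegS _ h2
    refine ⟨(hmemR _).mpr ⟨h2, h1, by rw [show p.2 + p.1 = p.1 + p.2 from by abel]; exact h3⟩,
      (hmemR _).mpr ⟨h1, hE, by rw [show p.1 + (-p.1-p.2) = -p.2 from by abel]; exact hn2⟩,
      (hmemR _).mpr ⟨hE, h1, by rw [show -p.1-p.2 + p.1 = -p.2 from by abel]; exact hn2⟩,
      (hmemR _).mpr ⟨h2, hE, by rw [show p.2 + (-p.1-p.2) = -p.1 from by abel]; exact hn1⟩,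
      (hmemR _).mpr ⟨hE, h2, by rw [show -p.1-p.2 + p.2 = -p.1 from by abel]; exact hn1⟩⟩
  have e2 : ∑ p ∈ R, Fc w p = ∑ p ∈ R, Fc w (p.2, p.1) := by
    refine Finset.sum_nbij' (fun p => (p.2, p.1)) (fun p => (p.2, p.1))
      (fun p hp => (hstab p hp).1) (fun p hp => (hstab p hp).1) ?_ ?_ ?_ <;> intro p hp <;> simp
  have e3 : ∑ p ∈ R, Fc w p = ∑ p ∈ R, Fc w (p.1, -p.1-p.2) := by
    refine Finset.sum_nbij' (fun p : (Fin 2 → ℤ) × (Fin 2 → ℤ) => (p.1, -p.1-p.2))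
      (fun p : (Fin 2 → ℤ) × (Fin 2 → ℤ) => (p.1, -p.1-p.2))
      (fun p hp => (hstab p hp).2.1) (fun p hp => (hstab p hp).2.1) ?_ ?_ ?_ <;> intro p hp
    · exact mk_eq _ _ rfl (by show -p.1 - (-p.1-p.2) = p.2; abel)
    · exact mk_eq _ _ rfl (by show -p.1 - (-p.1-p.2) = p.2; abel)
    · show Fc w p = Fc w (p.1, -p.1 - (-p.1-p.2))
      rw [show ((p.1, -p.1 - (-p.1-p.2)) : _ × _) = p from
        mk_eq _ _ rfl (by show -p.1 - (-p.1-p.2) = p.2; abel)]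
  have e4 : ∑ p ∈ R, Fc w p = ∑ p ∈ R, Fc w (-p.1-p.2, p.1) := by
    refine Finset.sum_nbij' (fun p : (Fin 2 → ℤ) × (Fin 2 → ℤ) => (p.2, -p.1-p.2))
      (fun p : (Fin 2 → ℤ) × (Fin 2 → ℤ) => (-p.1-p.2, p.1))
      (fun p hp => (hstab p hp).2.2.2.1) (fun p hp => (hstab p hp).2.2.1) ?_ ?_ ?_ <;> intro p hp
    · exact mk_eq _ _ (by show -p.2 - (-p.1-p.2) = p.1; abel) rfl
    · exact mk_eq _ _ rfl (by show -(-p.1-p.2) - p.1 = p.2; abel)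
    · show Fc w p = Fc w (-p.2 - (-p.1-p.2), p.2)
      rw [show ((-p.2 - (-p.1-p.2), p.2) : _ × _) = p from
        mk_eq _ _ (by show -p.2 - (-p.1-p.2) = p.1; abel) rfl]
  have e5 : ∑ p ∈ R, Fc w p = ∑ p ∈ R, Fc w (p.2, -p.1-p.2) := by
    refine Finset.sum_nbij' (fun p : (Fin 2 → ℤ) × (Fin 2 → ℤ) => (-p.1-p.2, p.1))
      (fun p : (Fin 2 → ℤ) × (Fin 2 → ℤ) => (p.2, -p.1-p.2))
      (fun p hp => (hstab p hp).2.2.1) (fun p hp => (hstab p hp).2.2.2.1) ?_ ?_ ?_ <;> intro p hp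
    · exact mk_eq _ _ rfl (by show -(-p.1-p.2) - p.1 = p.2; abel)
    · exact mk_eq _ _ (by show -p.2 - (-p.1-p.2) = p.1; abel) rfl
    · show Fc w p = Fc w (p.1, -(-p.1-p.2) - p.1)
      rw [show ((p.1, -(-p.1-p.2) - p.1) : _ × _) = p from
        mk_eq _ _ rfl (by show -(-p.1-p.2) - p.1 = p.2; abel)]
  have e6 : ∑ p ∈ R, Fc w p = ∑ p ∈ R, Fc w (-p.1-p.2, p.2) := by
    refine Finset.sum_nbij' (fun p : (Fin 2 → ℤ) × (Fin 2 → ℤ) => (-p.1-p.2, p.2))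
      (fun p : (Fin 2 → ℤ) × (Fin 2 → ℤ) => (-p.1-p.2, p.2))
      (fun p hp => (hstab p hp).2.2.2.2) (fun p hp => (hstab p hp).2.2.2.2) ?_ ?_ ?_ <;> intro p hp
    · exact mk_eq _ _ (by show -(-p.1-p.2) - p.2 = p.1; abel) rfl
    · exact mk_eq _ _ (by show -(-p.1-p.2) - p.2 = p.1; abel) rfl
    · show Fc w p = Fc w (-(-p.1-p.2) - p.2, p.2)
      rw [show ((-(-p.1-p.2) - p.2, p.2) : _ × _) = p from
        mk_eq _ _ (by show -(-p.1-p.2) - p.2 = p.1; abel) rfl]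
  have h6 : ∀ p : (Fin 2 → ℤ) × (Fin 2 → ℤ),
      Fc w p + Fc w (p.2, p.1) + Fc w (p.1, -p.1-p.2) + Fc w (-p.1-p.2, p.1)
        + Fc w (p.2, -p.1-p.2) + Fc w (-p.1-p.2, p.2) = 0 := by
    intro p
    exact six_sum w h0 hreal hdiv p.1 p.2
  have hc : ∑ p ∈ R, (Fc w p + Fc w (p.2, p.1) + Fc w (p.1, -p.1-p.2) + Fc w (-p.1-p.2, p.1)
      + Fc w (p.2, -p.1-p.2) + Fc w (-p.1-p.2, p.2)) = 0 :=
    Finset.sum_eq_zero fun p _ => h6 p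
  rw [Finset.sum_add_distrib, Finset.sum_add_distrib, Finset.sum_add_distrib,
    Finset.sum_add_distrib, Finset.sum_add_distrib, ← e2, ← e3, ← e4, ← e5, ← e6] at hc
  have : ∑ p ∈ R, Fc w p = 0 := by linear_combination hc / 6
  rw [this]
  simp

/-- derivative of the squared norm -/
lemma normsq_deriv (v : ℝ → E2) (v' : E2) (t : ℝ) (hv : HasDerivAt v v' t) :
    HasDerivAt (fun s => ‖v s‖^2) (2 * rip (v t) v') t := by
  have hcoord : ∀ j : Fin 2, HasDerivAt (fun s => v s j) (v' j) t := by
    intro j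
    have := ((EuclideanSpace.proj j (𝕜 := ℂ)).restrictScalars ℝ).hasFDerivAt.comp_hasDerivAt t hv
    exact this
  have hre : ∀ j : Fin 2, HasDerivAt (fun s => (v s j).re) ((v' j).re) t := fun j => by
    have := Complex.reCLM.hasFDerivAt.comp_hasDerivAt t (hcoord j)
    exact this
  have him : ∀ j : Fin 2, HasDerivAt (fun s => (v s j).im) ((v' j).im) t := fun j => by
    have := Complex.imCLM.hasFDerivAt.comp_hasDerivAt t (hcoord j)
    exact this
  have H := (((hre 0).mul (hre 0)).add ((him 0).mul (him 0))).add
    (((hre 1).mul (hre 1)).add ((him 1).mul (him 1)))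
  have heq : (fun s => ‖v s‖^2)
      = fun s => ((v s 0).re * (v s 0).re + (v s 0).im * (v s 0).im)
        + ((v s 1).re * (v s 1).re + (v s 1).im * (v s 1).im) := by
    funext s
    rw [EuclideanSpace.norm_eq, Real.sq_sqrt (by positivity), Fin.sum_univ_two]
    simp only [Complex.sq_norm, Complex.normSq_apply]
  rw [heq]
  refine H.congr_deriv ?_
  simp only [rip, Complex.add_re, Complex.mul_re, Complex.conj_re, Complex.conj_im]
  ring

lemma rip_le (v w : E2) : rip v w ≤ ‖v‖ * ‖w‖ := by
  have h1 : rip v w = (inner ℂ v w : ℂ).re := by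
    rw [rip, PiLp.inner_apply, Fin.sum_univ_two]
    simp [RCLike.inner_apply]
    ring
  rw [h1]
  calc (inner ℂ v w : ℂ).re ≤ ‖(inner ℂ v w : ℂ)‖ := Complex.re_le_norm _
    _ = ‖(inner ℂ v w : ℂ)‖ := rfl
    _ ≤ ‖v‖ * ‖w‖ := norm_inner_le_norm v w

lemma conj_dot (v : E2) (k : Z2) (hv : dotZ v k = 0) :
    (starRingEnd ℂ) (v 0) * (k 0 : ℂ) + (starRingEnd ℂ) (v 1) * (k 1 : ℂ) = 0 := by
  have := congrArg (starRingEnd ℂ) hv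
  rw [dotZ_expand] at this
  simpa [map_add, map_mul] using this

lemma rip_sub_add (v x y z : E2) : rip v (x - y + z) = rip v x - rip v y + rip v z := by
  simp only [rip, PiLp.add_apply, PiLp.sub_apply]
  have : (starRingEnd ℂ) (v 0) * (x 0 - y 0 + z 0) + (starRingEnd ℂ) (v 1) * (x 1 - y 1 + z 1)
      = ((starRingEnd ℂ) (v 0) * x 0 + (starRingEnd ℂ) (v 1) * x 1)
        - ((starRingEnd ℂ) (v 0) * y 0 + (starRingEnd ℂ) (v 1) * y 1)
        + ((starRingEnd ℂ) (v 0) * z 0 + (starRingEnd ℂ) (v 1) * z 1) := by ring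
  rw [this, Complex.add_re, Complex.sub_re]

lemma rip_real_smul (r : ℝ) (v w : E2) : rip v (((r : ℝ) : ℂ) • w) = r * rip v w := by
  simp only [rip, PiLp.smul_apply, smul_eq_mul]
  have : (starRingEnd ℂ) (v 0) * ((r : ℂ) * w 0) + (starRingEnd ℂ) (v 1) * ((r : ℂ) * w 1)
      = (r : ℂ) * ((starRingEnd ℂ) (v 0) * w 0 + (starRingEnd ℂ) (v 1) * w 1) := by ring
  rw [this, Complex.re_ofReal_mul]

lemma rip_proj (k : Z2) (v w : E2) (hv : dotZ v k = 0) : rip v (projP k w) = rip v w := by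
  have hconj := conj_dot v k hv
  simp only [rip, projP, PiLp.toLp_apply]
  congr 1
  linear_combination (-(dotZ w k / ((∑ i, ((k i : ℝ))^2 : ℝ) : ℂ))) * hconj

lemma one_le_znorm_sq (k : Z2) (hk : k ≠ 0) : (1:ℝ) ≤ znorm k ^ 2 := by
  rw [znorm_sq, qk]
  have h : k 0 ≠ 0 ∨ k 1 ≠ 0 := by
    by_contra h; push_neg at h
    exact hk (funext fun j => by fin_cases j <;> simp [h.1, h.2])
  rcases h with h | h
  · have h1 : (1:ℤ) ≤ (k 0)^2 := by rcases h.lt_or_gt with h' | h' <;> nlinarith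
    have h2 : (1:ℝ) ≤ ((k 0 : ℝ))^2 := by exact_mod_cast h1
    nlinarith [sq_nonneg ((k 1 : ℝ))]
  · have h1 : (1:ℤ) ≤ (k 1)^2 := by rcases h.lt_or_gt with h' | h' <;> nlinarith
    have h2 : (1:ℝ) ≤ ((k 1 : ℝ))^2 := by exact_mod_cast h1
    nlinarith [sq_nonneg ((k 0 : ℝ))]

end Aux

/-- 2D enstrophy decay: if `V(f(t)) ≤ ν² V*` for all `t`, then along any real
divergence-free solution of a symmetric Galerkin projection,
`‖u(t₀+t)‖₁ ≤ (‖u(t₀)‖₁ - √V*) e^{-νt} + √V*` for all `t ≥ 0`. -/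
theorem enstrophy_norm_decay_2d (ν : ℝ) (hν : 0 < ν) (n : ℝ) (hn : 1 ≤ n)
    (Vstar : ℝ) (hVstar : 0 ≤ Vstar)
    (f : ℝ → (Fin 2 → ℤ) → EuclideanSpace ℂ (Fin 2))
    (hf0 : ∀ t, f t 0 = 0) (hfsupp : ∀ t k, n < znorm k → f t k = 0)
    (hfc : ∀ k, Continuous fun t => f t k)
    (hVf : ∀ t, enstrophy (f t) ≤ ν^2 * Vstar)
    (u : ℝ → (Fin 2 → ℤ) → EuclideanSpace ℂ (Fin 2))
    (hu : IsGalerkinSol ν n f u)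
    (hreal : ∀ t, realSeq (u t)) (hdiv : ∀ t, divFree (u t)) :
    ∀ t₀ t : ℝ, 0 ≤ t →
      Real.sqrt (enstrophy (u (t₀ + t)))
        ≤ (Real.sqrt (enstrophy (u t₀)) - Real.sqrt Vstar) * Real.exp (-ν * t)
          + Real.sqrt Vstar := by
  obtain ⟨hu0, husup, huderiv⟩ := hu
  classical
  -- the finite set of active modes
  set M : ℤ := ⌈n⌉ with hM
  set S : Finset (Fin 2 → ℤ) :=
    (Fintype.piFinset fun _ : Fin 2 => Finset.Icc (-M) M).filter
      (fun k => k ≠ 0 ∧ znorm k ≤ n) with hSdef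
  have hS : ∀ k, k ∈ S ↔ (k ≠ 0 ∧ znorm k ≤ n) := by
    intro k
    constructor
    · intro hk; exact (Finset.mem_filter.mp hk).2
    · intro hk
      refine Finset.mem_filter.mpr ⟨?_, hk⟩
      refine Fintype.mem_piFinset.mpr fun i => ?_
      rw [Finset.mem_Icc]
      have hq : qk k ≤ n^2 := by
        rw [← znorm_sq]
        have h3 : (0:ℝ) ≤ znorm k := Real.sqrt_nonneg _
        nlinarith [hk.2]
      rw [qk] at hq
      have h1 : ((k i : ℝ))^2 ≤ n^2 := by
        fin_cases i
        · show ((k 0 : ℝ))^2 ≤ n^2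
          nlinarith [sq_nonneg ((k 1 : ℝ))]
        · show ((k 1 : ℝ))^2 ≤ n^2
          nlinarith [sq_nonneg ((k 0 : ℝ))]
      have hn0 : (0:ℝ) ≤ n := le_trans zero_le_one hn
      have habs : |(k i : ℝ)| ≤ n := by
        rw [← Real.sqrt_sq_eq_abs]
        calc Real.sqrt (((k i : ℝ))^2) ≤ Real.sqrt (n^2) := Real.sqrt_le_sqrt h1
          _ = n := Real.sqrt_sq hn0
      have hceil : n ≤ (M : ℝ) := by rw [hM]; exact_mod_cast Int.le_ceil n
      rw [abs_le] at habs
      constructor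
      · have : -(M:ℝ) ≤ (k i : ℝ) := by linarith [habs.1]
        exact_mod_cast this
      · have : (k i : ℝ) ≤ (M:ℝ) := le_trans habs.2 hceil
        exact_mod_cast this
  have husupp : ∀ t k, k ∉ S → u t k = 0 := by
    intro t k hk
    by_cases h0 : k = 0
    · rw [h0]; exact hu0 t
    by_cases h1 : znorm k ≤ n
    · exact absurd ((hS k).mpr ⟨h0, h1⟩) hk
    · exact husup t k (lt_of_not_ge h1)
  have hfsupp' : ∀ t k, k ∉ S → f t k = 0 := by
    intro t k hk
    by_cases h0 : k = 0
    · rw [h0]; exact hf0 t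
    by_cases h1 : znorm k ≤ n
    · exact absurd ((hS k).mpr ⟨h0, h1⟩) hk
    · exact hfsupp t k (lt_of_not_ge h1)
  have hens : ∀ w : (Fin 2 → ℤ) → EuclideanSpace ℂ (Fin 2), (∀ k, k ∉ S → w k = 0) →
      enstrophy w = ∑ k ∈ S, znorm k ^ 2 * ‖w k‖^2 := by
    intro w hw
    exact tsum_eq_sum (fun k hk => by rw [hw k hk]; simp)
  have hNsum : ∀ t k, (∑' k1, Nterm (u t) k k1) = ∑ k1 ∈ S, Nterm (u t) k k1 := by
    intro t k
    refine tsum_eq_sum fun k1 hk1 => ?_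
    by_cases h0 : k1 = 0
    · simp [Nterm, h0]
    · rw [Nterm, if_neg h0, husupp t k1 hk1]
      simp [dotZ]
  set V : ℝ → ℝ := fun s => ∑ k ∈ S, znorm k ^ 2 * ‖u s k‖^2 with hVdef
  set V' : ℝ → ℝ :=
    fun s => ∑ k ∈ S, znorm k ^ 2 * (2 * rip (u s k) (GalerkinRHS ν (f s k) (u s) k))
    with hV'def
  have hVd : ∀ s, HasDerivAt V (V' s) s := by
    intro s
    refine HasDerivAt.fun_sum fun k hk => ?_
    obtain ⟨hk0, hkn⟩ := (hS k).mp hk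
    exact (normsq_deriv (fun r => u r k) _ s (huderiv s k hk0 hkn)).const_mul _
  have hVnn : ∀ s, 0 ≤ V s := fun s => Finset.sum_nonneg (fun k _ => by positivity)
  -- the key differential inequality
  have hVineq : ∀ s, V' s ≤ -(2*ν) * V s + 2*ν*Real.sqrt Vstar * Real.sqrt (V s) := by
    intro s
    have hdecomp : ∀ k ∈ S, rip (u s k) (GalerkinRHS ν (f s k) (u s) k)
        = rip (u s k) (∑ k1 ∈ S, Nterm (u s) k k1)
          - ν * znorm k ^ 2 * ‖u s k‖^2 + rip (u s k) (f s k) := by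
      intro k hk
      rw [GalerkinRHS, hNsum s k, rip_sub_add, rip_proj k (u s k) (f s k) (hdiv s k),
        rip_real_smul, norm_sq_eq]
      try ring
    have hsplit : V' s = 2 * (∑ k ∈ S, znorm k ^ 2 * rip (u s k) (∑ k1 ∈ S, Nterm (u s) k k1))
        - 2*ν * (∑ k ∈ S, znorm k ^ 2 * (znorm k ^ 2 * ‖u s k‖^2))
        + 2 * (∑ k ∈ S, znorm k ^ 2 * rip (u s k) (f s k)) := by
      rw [hV'def]
      simp only
      rw [Finset.mul_sum, Finset.mul_sum, Finset.mul_sum, ← Finset.sum_sub_distrib,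
        ← Finset.sum_add_distrib]
      refine Finset.sum_congr rfl fun k hk => ?_
      rw [hdecomp k hk]
      ring
    have hzero : ∑ k ∈ S, znorm k ^ 2 * rip (u s k) (∑ k1 ∈ S, Nterm (u s) k k1) = 0 :=
      nonlin n S hS (u s) (hu0 s) (husupp s) (hreal s) (hdiv s)
    rw [hsplit, hzero]
    have hdis : V s ≤ ∑ k ∈ S, znorm k ^ 2 * (znorm k ^ 2 * ‖u s k‖^2) := by
      rw [hVdef]
      refine Finset.sum_le_sum fun k hk => ?_
      have h1 := one_le_znorm_sq k ((hS k).mp hk).1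
      nlinarith [mul_nonneg (mul_nonneg (sq_nonneg (znorm k)) (sq_nonneg ‖u s k‖))
        (sub_nonneg.mpr h1)]
    have hforce : ∑ k ∈ S, znorm k ^ 2 * rip (u s k) (f s k)
        ≤ Real.sqrt (V s) * (ν * Real.sqrt Vstar) := by
      have step1 : ∑ k ∈ S, znorm k ^ 2 * rip (u s k) (f s k)
          ≤ ∑ k ∈ S, (znorm k * ‖u s k‖) * (znorm k * ‖f s k‖) := by
        refine Finset.sum_le_sum fun k _ => ?_
        have h1 := rip_le (u s k) (f s k)
        have h2 : (0:ℝ) ≤ znorm k := Real.sqrt_nonneg _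
        nlinarith [norm_nonneg (u s k), norm_nonneg (f s k)]
      have step2 : ∑ k ∈ S, (znorm k * ‖u s k‖) * (znorm k * ‖f s k‖)
          ≤ Real.sqrt (V s) * Real.sqrt (∑ k ∈ S, znorm k ^ 2 * ‖f s k‖^2) := by
        have hcs := Finset.sum_mul_sq_le_sq_mul_sq S (fun k => znorm k * ‖u s k‖)
          (fun k => znorm k * ‖f s k‖)
        have hnn : (0:ℝ) ≤ ∑ k ∈ S, (znorm k * ‖u s k‖) * (znorm k * ‖f s k‖) :=
          Finset.sum_nonneg fun k _ => mul_nonneg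
            (mul_nonneg (znorm_nonneg k) (norm_nonneg _))
            (mul_nonneg (znorm_nonneg k) (norm_nonneg _))
        have h1 : ∑ k ∈ S, (znorm k * ‖u s k‖)^2 = V s := by
          rw [hVdef]
          exact Finset.sum_congr rfl fun k _ => by ring
        have h2 : ∑ k ∈ S, (znorm k * ‖f s k‖)^2 = ∑ k ∈ S, znorm k ^ 2 * ‖f s k‖^2 :=
          Finset.sum_congr rfl fun k _ => by ring
        rw [h1, h2] at hcs
        calc ∑ k ∈ S, (znorm k * ‖u s k‖) * (znorm k * ‖f s k‖)
            = Real.sqrt ((∑ k ∈ S, (znorm k * ‖u s k‖) * (znorm k * ‖f s k‖))^2) :=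
              (Real.sqrt_sq hnn).symm
          _ ≤ Real.sqrt (V s * ∑ k ∈ S, znorm k ^ 2 * ‖f s k‖^2) := Real.sqrt_le_sqrt hcs
          _ = Real.sqrt (V s) * Real.sqrt (∑ k ∈ S, znorm k ^ 2 * ‖f s k‖^2) :=
              Real.sqrt_mul (hVnn s) _
      have step3 : Real.sqrt (∑ k ∈ S, znorm k ^ 2 * ‖f s k‖^2) ≤ ν * Real.sqrt Vstar := by
        have h1 : ∑ k ∈ S, znorm k ^ 2 * ‖f s k‖^2 = enstrophy (f s) := (hens _ (hfsupp' s)).symm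
        rw [h1]
        calc Real.sqrt (enstrophy (f s)) ≤ Real.sqrt (ν^2 * Vstar) := Real.sqrt_le_sqrt (hVf s)
          _ = Real.sqrt (ν^2) * Real.sqrt Vstar := Real.sqrt_mul (sq_nonneg ν) _
          _ = ν * Real.sqrt Vstar := by rw [Real.sqrt_sq hν.le]
      calc ∑ k ∈ S, znorm k ^ 2 * rip (u s k) (f s k)
          ≤ Real.sqrt (V s) * Real.sqrt (∑ k ∈ S, znorm k ^ 2 * ‖f s k‖^2) :=
            le_trans step1 step2
        _ ≤ Real.sqrt (V s) * (ν * Real.sqrt Vstar) := by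
            have := Real.sqrt_nonneg (V s)
            nlinarith [step3, Real.sqrt_nonneg (∑ k ∈ S, znorm k ^ 2 * ‖f s k‖^2)]
    have h2ν : (0:ℝ) ≤ 2*ν := by linarith
    nlinarith [mul_le_mul_of_nonneg_left hdis h2ν, hforce]
  -- Grönwall argument
  intro t₀ t ht
  have hens1 : enstrophy (u (t₀ + t)) = V (t₀ + t) := hens _ (husupp (t₀ + t))
  have hens2 : enstrophy (u t₀) = V t₀ := hens _ (husupp t₀)
  rw [hens1, hens2]
  refine le_of_forall_pos_le_add fun η hη => ?_
  set g : ℝ → ℝ := fun s => Real.sqrt (V s + η^2) with hgdef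
  have hgpos : ∀ s, 0 < V s + η^2 := fun s => by nlinarith [hVnn s]
  have hgd : ∀ s, HasDerivAt g (V' s / (2 * g s)) s := fun s =>
    ((hVd s).add_const (η^2)).sqrt (ne_of_gt (hgpos s))
  have hgge : ∀ s, η ≤ g s := by
    intro s
    calc η = Real.sqrt (η^2) := (Real.sqrt_sq hη.le).symm
      _ ≤ g s := Real.sqrt_le_sqrt (by nlinarith [hVnn s])
  have hgpos' : ∀ s, 0 < g s := fun s => lt_of_lt_of_le hη (hgge s)
  have hgsq : ∀ s, g s ^ 2 = V s + η^2 := fun s => Real.sq_sqrt (hgpos s).le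
  have hgV : ∀ s, Real.sqrt (V s) ≤ g s := fun s => Real.sqrt_le_sqrt (by nlinarith)
  have hgb : ∀ s, V' s / (2 * g s) ≤ -ν * g s + ν * (Real.sqrt Vstar + η) := by
    intro s
    rw [div_le_iff₀ (by positivity)]
    have h1 := hVineq s
    have h2 := hgV s
    have h3 := hgsq s
    have h5 := hgge s
    have expand : (-ν * g s + ν * (Real.sqrt Vstar + η)) * (2 * g s)
        = -(2*ν) * V s - 2*ν*η^2 + 2*ν*Real.sqrt Vstar * g s + 2*ν*η*g s := by
      linear_combination (-(2*ν)) * h3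
    rw [expand]
    nlinarith [mul_nonneg (mul_nonneg hν.le (Real.sqrt_nonneg Vstar)) (sub_nonneg.mpr h2),
      mul_nonneg (mul_nonneg hν.le hη.le) (sub_nonneg.mpr h5)]
  have hfreq : ∀ x ∈ Set.Ico t₀ (t₀ + t), ∀ r, V' x / (2 * g x) < r →
      ∃ᶠ z in nhdsWithin x (Set.Ioi x), (z - x)⁻¹ * (g z - g x) < r := by
    intro x _ r hr
    have hslope := hasDerivAt_iff_tendsto_slope.mp (hgd x)
    have h2 : Filter.Tendsto (slope g x) (nhdsWithin x (Set.Ioi x))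
        (nhds (V' x / (2 * g x))) :=
      hslope.mono_left (nhdsWithin_mono x fun z hz => ne_of_gt hz)
    have h3 : ∀ᶠ z in nhdsWithin x (Set.Ioi x), slope g x z < r := h2.eventually_lt_const hr
    refine h3.frequently.mono fun z hz => ?_
    rwa [slope_def_field, div_eq_inv_mul] at hz
  have hG := le_gronwallBound_of_liminf_deriv_right_le
    (f := g) (f' := fun s => V' s / (2 * g s)) (δ := g t₀) (K := -ν)
    (ε := ν * (Real.sqrt Vstar + η)) (a := t₀) (b := t₀ + t)
    (fun s _ => (hgd s).continuousAt.continuousWithinAt)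
    hfreq le_rfl
    (fun x _ => hgb x)
    (t₀ + t) (Set.mem_Icc.mpr ⟨by linarith, le_rfl⟩)
  rw [gronwallBound_of_K_ne_0 (neg_ne_zero.mpr hν.ne')] at hG
  simp only [add_sub_cancel_left] at hG
  have hεK : ν * (Real.sqrt Vstar + η) / (-ν) = -(Real.sqrt Vstar + η) := by
    rw [div_neg, mul_comm, mul_div_assoc, div_self hν.ne', mul_one]
  rw [hεK] at hG
  set E : ℝ := Real.exp (-ν * t) with hE
  have hE0 : 0 < E := Real.exp_pos _
  have hE1 : E ≤ 1 := Real.exp_le_one_iff.mpr (by nlinarith)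
  have hδ : g t₀ ≤ Real.sqrt (V t₀) + η := by
    have h1 : V t₀ + η^2 ≤ (Real.sqrt (V t₀) + η)^2 := by
      nlinarith [Real.sq_sqrt (hVnn t₀), Real.sqrt_nonneg (V t₀), hη.le]
    calc g t₀ ≤ Real.sqrt ((Real.sqrt (V t₀) + η)^2) := Real.sqrt_le_sqrt h1
      _ = Real.sqrt (V t₀) + η := Real.sqrt_sq (by positivity)
  have hfinal : Real.sqrt (V (t₀ + t)) ≤ g (t₀ + t) := hgV (t₀ + t)
  have hmul := mul_le_mul_of_nonneg_right hδ hE0.le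
  calc Real.sqrt (V (t₀ + t)) ≤ g (t₀ + t) := hfinal
    _ ≤ g t₀ * E + -(Real.sqrt Vstar + η) * (E - 1) := hG
    _ ≤ (Real.sqrt (V t₀) + η) * E + -(Real.sqrt Vstar + η) * (E - 1) := by linarith
    _ = (Real.sqrt (V t₀) - Real.sqrt Vstar) * E + Real.sqrt Vstar + η := by ring
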